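/- arXiv:2510.22896 — 3 statements merged into one kernel-verified Lean document; each statement's English description precedes it below -/
import Mathlib

section
/- The closed interval [0,1/2] is closed under both ⋆ and ◇, and each of ⟨[0,1/2], ⋆⟩ and ⟨[0,1/2], ◇⟩ is a commutative semigroup (i.e., both operations are commutative, associative, and map [0,1/2] × [0,1/2] into [0,1/2]). -/
open scoped Classical

noncomputable def star (a b : ℝ) : ℝ := (1 - a) * b + a * (1 - b)

noncomputable def dia (a b : ℝ) : ℝ :=
  if a ∈ Set.Ioo (0:ℝ) 1 ∧ b ∈ Set.Ioo (0:ℝ) 1 then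
    a * b / (a * b + (1 - a) * (1 - b))
  else 0

lemma dia_comm' (a b : ℝ) : dia a b = dia b a := by
  unfold dia
  split_ifs with h1 h2 h2
  · ring_nf
  · exact absurd ⟨h1.2, h1.1⟩ h2
  · exact absurd ⟨h2.2, h2.1⟩ h1
  · rfl

lemma dia_mem (a b : ℝ) (ha : 0 < a) (ha' : a ≤ 1/2) (hb : 0 < b) (hb' : b ≤ 1/2) :
    dia a b = a * b / (a * b + (1 - a) * (1 - b)) ∧
    0 < dia a b ∧ dia a b ≤ 1/2 ∧ dia a b < 1 := by
  have hD : 0 < a * b + (1 - a) * (1 - b) := by nlinarith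
  have heq : dia a b = a * b / (a * b + (1 - a) * (1 - b)) := by
    unfold dia
    rw [if_pos ⟨⟨ha, by linarith⟩, ⟨hb, by linarith⟩⟩]
  refine ⟨heq, ?_, ?_, ?_⟩
  · rw [heq]; positivity
  · rw [heq, div_le_iff₀ hD]; nlinarith
  · rw [heq, div_lt_one hD]; nlinarith

lemma dia_assoc_pos (a b c : ℝ) (ha : 0 < a) (ha' : a ≤ 1/2) (hb : 0 < b) (hb' : b ≤ 1/2)
    (hc : 0 < c) (hc' : c ≤ 1/2) :
    dia (dia a b) c = a * b * c / (a * b * c + (1 - a) * (1 - b) * (1 - c)) := by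
  obtain ⟨heq, h1, h2, h3⟩ := dia_mem a b ha ha' hb hb'
  have hD : 0 < a * b + (1 - a) * (1 - b) := by nlinarith
  have hD2 : 0 < a * b * c + (1 - a) * (1 - b) * (1 - c) := by nlinarith
  rw [heq]
  unfold dia
  rw [if_pos ⟨⟨heq ▸ h1, heq ▸ h3⟩, ⟨hc, by linarith⟩⟩]
  rw [div_eq_div_iff, ] <;> [skip; skip; exact ne_of_gt hD2]
  · field_simp
    try ring
  · have : (1 - a * b / (a * b + (1 - a) * (1 - b))) = (1-a)*(1-b) / (a * b + (1 - a) * (1 - b)) := by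
      field_simp; try ring
    rw [this]
    rw [div_mul_eq_mul_div, div_mul_eq_mul_div, ← add_div]
    refine ne_of_gt (div_pos ?_ hD)
    nlinarith

lemma dia_zero (a b : ℝ) (h : ¬(a ∈ Set.Ioo (0:ℝ) 1 ∧ b ∈ Set.Ioo (0:ℝ) 1)) : dia a b = 0 := by
  unfold dia; rw [if_neg h]

/-- `[0,1/2]` is closed under both `⋆` and `◇`, and each of them makes it a
commutative semigroup. -/
theorem stmt5 :
    ∀ a ∈ Set.Icc (0:ℝ) (1/2), ∀ b ∈ Set.Icc (0:ℝ) (1/2), ∀ c ∈ Set.Icc (0:ℝ) (1/2),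
      star a b ∈ Set.Icc (0:ℝ) (1/2) ∧
      dia a b ∈ Set.Icc (0:ℝ) (1/2) ∧
      star a b = star b a ∧
      star (star a b) c = star a (star b c) ∧
      dia a b = dia b a ∧
      dia (dia a b) c = dia a (dia b c) := by
  rintro a ⟨ha0, ha1⟩ b ⟨hb0, hb1⟩ c ⟨hc0, hc1⟩
  refine ⟨⟨by unfold _root_.star; nlinarith, by unfold _root_.star; nlinarith⟩, ?_, by unfold _root_.star; ring,
    by unfold _root_.star; ring, dia_comm' a b, ?_⟩
  · rcases eq_or_lt_of_le ha0 with h | ha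
    · constructor <;> simp [dia_zero a b (by simp [← h])]
    rcases eq_or_lt_of_le hb0 with h | hb
    · constructor <;> simp [dia_zero a b (by simp [← h])]
    obtain ⟨_, h1, h2, _⟩ := dia_mem a b ha ha1 hb hb1
    exact ⟨le_of_lt h1, h2⟩
  · rcases eq_or_lt_of_le ha0 with h | ha
    · rw [dia_zero a b (by simp [← h]), dia_zero a (dia b c) (by simp [← h]),
        dia_zero 0 c (by simp)]
    rcases eq_or_lt_of_le hb0 with h | hb
    · rw [dia_zero a b (by simp [← h]), dia_zero b c (by simp [← h]),
        dia_zero 0 c (by simp), dia_zero a 0 (by simp)]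
    rcases eq_or_lt_of_le hc0 with h | hc
    · rw [dia_zero b c (by simp [← h]), dia_zero (dia a b) c (by simp [← h]),
        dia_zero a 0 (by simp)]
    rw [dia_assoc_pos a b c ha ha1 hb hb1 hc hc1, dia_comm' a (dia b c), dia_comm' b c,
      dia_assoc_pos c b a hc hc1 hb hb1 ha ha1]
    ring_nf
end

section
/- For each integer k ≥ 0 and each integer a with 0 ≤ a ≤ 2^k, the identity Σ_{s + 2b = 2^k - a, s,b ≥ 0} (2^k)! / (s! (a+b)! b!) · 2^s = C(2^{k+1}, 2^k - a) holds. -/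
open Polynomial Finset

private def auxG (n m t : ℕ) : ℕ :=
  if t ≤ m then n.choose t * (t.choose (m - t) * 2 ^ (t - (m - t))) else 0

lemma key_coeff (n m : ℕ) :
    ((X * (X + C 2) + 1 : ℕ[X]) ^ n).coeff m
      = ∑ t ∈ Finset.range (n + 1), auxG n m t := by
  rw [add_pow, Polynomial.finset_sum_coeff]
  refine Finset.sum_congr rfl fun t ht => ?_
  rw [mul_pow, one_pow, mul_one, mul_assoc, Polynomial.coeff_X_pow_mul']
  unfold auxG
  split_ifs with h
  · rw [← Polynomial.C_eq_natCast, Polynomial.coeff_mul_C, Polynomial.coeff_X_add_C_pow]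
    push_cast [Nat.cast_id]
    ring
  · rfl

lemma key (n m : ℕ) :
    ∑ b ∈ Finset.range (m / 2 + 1),
      n.choose (m - b) * (m - b).choose b * 2 ^ (m - 2 * b) = (2 * n).choose m := by
  have hC2 : (C 2 : ℕ[X]) = 2 := by simp
  have hsq : (X + 1 : ℕ[X]) ^ 2 = X * (X + C 2) + 1 := by rw [hC2]; ring
  have hcoeff : (2 * n).choose m = ∑ t ∈ Finset.range (n + 1), auxG n m t := by
    have h0 := Polynomial.coeff_X_add_one_pow ℕ (2 * n) m
    rw [pow_mul, hsq, key_coeff] at h0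
    simpa using h0.symm
  have hR : (2 * n).choose m = ∑ t ∈ Finset.range (n + m + 1), auxG n m t := by
    rw [hcoeff]
    refine Finset.sum_subset (Finset.range_subset_range.2 (by omega)) fun t _ ht => ?_
    simp only [Finset.mem_range, not_lt] at ht
    unfold auxG
    split_ifs with h1
    · rw [Nat.choose_eq_zero_of_lt (by omega), zero_mul]
    · rfl
  have step1 : ∑ b ∈ Finset.range (m / 2 + 1),
      n.choose (m - b) * (m - b).choose b * 2 ^ (m - 2 * b)
      = ∑ b ∈ Finset.range (m + 1),
        n.choose (m - b) * (m - b).choose b * 2 ^ (m - 2 * b) := by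
    refine Finset.sum_subset (Finset.range_subset_range.2 (by omega)) fun b _ hb => ?_
    simp only [Finset.mem_range, not_lt] at hb
    rw [show (m - b).choose b = 0 from Nat.choose_eq_zero_of_lt (by omega), mul_zero, zero_mul]
  have step2 : ∑ t ∈ Finset.range (m + 1), auxG n m t
      = ∑ b ∈ Finset.range (m + 1),
        n.choose (m - b) * (m - b).choose b * 2 ^ (m - 2 * b) := by
    rw [← Finset.sum_range_reflect]
    refine Finset.sum_congr rfl fun b hb => ?_
    simp only [Finset.mem_range] at hb
    have hbm : b ≤ m := by omega
    simp only [Nat.add_sub_cancel]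
    unfold auxG
    rw [if_pos (by omega)]
    have e1 : m - (m - b) = b := by omega
    rw [e1]
    have e2 : m - b - b = m - 2 * b := by omega
    rw [e2]
    ring
  have hL : ∑ t ∈ Finset.range (m + 1), auxG n m t
      = ∑ t ∈ Finset.range (n + m + 1), auxG n m t := by
    refine Finset.sum_subset (Finset.range_subset_range.2 (by omega)) fun t _ ht => ?_
    simp only [Finset.mem_range, not_lt] at ht
    unfold auxG
    rw [if_neg (by omega)]
  rw [step1, ← step2, hL, ← hR]

theorem stmt13 (k a : ℕ) (ha : a ≤ 2 ^ k) :
    ∑ b ∈ Finset.range ((2 ^ k - a) / 2 + 1),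
      (2 ^ k).factorial /
        ((2 ^ k - a - 2 * b).factorial * (a + b).factorial * b.factorial) *
        2 ^ (2 ^ k - a - 2 * b)
      = Nat.choose (2 ^ (k + 1)) (2 ^ k - a) := by
  set n := 2 ^ k with hn
  set m := n - a with hm
  have hpow : (2 : ℕ) ^ (k + 1) = 2 * n := by rw [hn, pow_succ]; ring
  rw [hpow, ← key n m]
  refine Finset.sum_congr rfl fun b hb => ?_
  simp only [Finset.mem_range] at hb
  have h2b : 2 * b ≤ m := by omega
  have habn : a + b ≤ n := by omega
  have hdiv : n.factorial /
      ((m - 2 * b).factorial * (a + b).factorial * b.factorial)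
      = n.choose (m - b) * (m - b).choose b := by
    have h1 := Nat.choose_mul_factorial_mul_factorial (show m - b ≤ n by omega)
    have h2 := Nat.choose_mul_factorial_mul_factorial (show b ≤ m - b by omega)
    have e1 : n - (m - b) = a + b := by omega
    have e2 : m - b - b = m - 2 * b := by omega
    rw [e1] at h1
    rw [e2] at h2
    refine Nat.div_eq_of_eq_mul_left ?_ ?_
    · positivity
    · rw [← h1, ← h2]; ring
  rw [show n - a - 2 * b = m - 2 * b from by omega, hdiv]
end

section
/- For every binary string α ∈ {0,1}^k define φ(α) recursively by φ(1^l) = φ(0^l) = (2^l)!·2^{2^l} for l ≥ 0, and φ(β01^l) = (2^l)!·(φ(β0))^{2^l}, φ(β10^l) = (2^l)!·(φ(β1))^{2^l}. Then for each α ∈ {0,1}^k: 2^{2^{k+1}-1} ≤ φ(α) ≤ (2^k)!·2^{2^k}, and φ(α)·2^{1-2^{k+1}} is an odd integer. -/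
/-- `phi ls` is `φ(α)` where `ls = [t₁, …, t_r]` is the list of run lengths of the binary
string `α` (so the length of `α` is `ls.sum`).  It satisfies `phi [] = 2`,
`phi [l] = (2^l)! · 2^{2^l}` and `phi (ls ++ [l]) = (2^l)! · (phi ls)^{2^l}`, which is
exactly the recursion `φ(0^l) = φ(1^l) = (2^l)!·2^{2^l}`,
`φ(β01^l) = (2^l)!·(φ(β0))^{2^l}`, `φ(β10^l) = (2^l)!·(φ(β1))^{2^l}`. -/
def phi (ls : List ℕ) : ℕ :=
  ls.foldl (fun acc l => (2 ^ l).factorial * acc ^ (2 ^ l)) 2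

lemma val2_fact_two_pow (l : ℕ) : padicValNat 2 ((2 ^ l).factorial) = 2 ^ l - 1 := by
  have h := sub_one_mul_padicValNat_factorial (p := 2) (2 ^ l)
  have hd : (Nat.digits 2 (2 ^ l)).sum = 1 := by
    have : Nat.digits 2 (2 ^ l * 1) = List.replicate l 0 ++ Nat.digits 2 1 :=
      Nat.digits_base_pow_mul (by norm_num) (by norm_num)
    rw [mul_one] at this
    rw [this]
    simp
  rw [hd] at h
  norm_num at h
  exact h

lemma fact_two_pow_eq (l : ℕ) :
    ∃ m : ℕ, Odd m ∧ (2 ^ l).factorial = 2 ^ (2 ^ l - 1) * m := by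
  refine ⟨ordCompl[2] ((2 ^ l).factorial), ?_, ?_⟩
  · exact Nat.odd_iff.mpr (Nat.two_dvd_ne_zero.mp
      (Nat.not_dvd_ordCompl Nat.prime_two (2 ^ l).factorial_ne_zero))
  · have hfz : ((2 ^ l).factorial).factorization 2 = 2 ^ l - 1 := by
      rw [Nat.factorization_def _ Nat.prime_two]
      exact val2_fact_two_pow l
    rw [← hfz]
    exact (Nat.ordProj_mul_ordCompl_eq_self ((2 ^ l).factorial) 2).symm

lemma phi_append (ls : List ℕ) (l : ℕ) :
    phi (ls ++ [l]) = (2 ^ l).factorial * (phi ls) ^ (2 ^ l) := by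
  simp [phi, List.foldl_append]

lemma phi_key (ls : List ℕ) :
    ∃ m : ℕ, Odd m ∧ phi ls = 2 ^ (2 ^ (ls.sum + 1) - 1) * m ∧
      phi ls ≤ (2 ^ ls.sum).factorial * 2 ^ (2 ^ ls.sum) := by
  induction ls using List.reverseRecOn with
  | nil => exact ⟨1, odd_one, by simp [phi], by simp [phi]⟩
  | append_singleton ls l ih =>
    obtain ⟨m, hm, heq, hle⟩ := ih
    obtain ⟨m', hm', hfac⟩ := fact_two_pow_eq l
    set k := ls.sum with hk
    have hsum : (ls ++ [l]).sum = k + l := by simp [hk]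
    have hexp : (2 ^ l - 1) + (2 ^ (k + 1) - 1) * 2 ^ l = 2 ^ (k + l + 1) - 1 := by
      have h1 : (1:ℕ) ≤ 2 ^ l := Nat.one_le_two_pow
      have h2 : (1:ℕ) ≤ 2 ^ (k + 1) := Nat.one_le_two_pow
      have h3 : 2 ^ (k + 1) * 2 ^ l = 2 ^ (k + l + 1) := by
        rw [← pow_add]; ring_nf
    
      rw [Nat.sub_mul, one_mul]
      have h4 : 2 ^ l ≤ 2 ^ (k + 1) * 2 ^ l := Nat.le_mul_of_pos_left _ (by positivity)
      omega
    refine ⟨m' * m ^ (2 ^ l), hm'.mul (hm.pow), ?_, ?_⟩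
    · rw [phi_append, hsum, hfac, heq, mul_pow, ← pow_mul, hexp.symm, pow_add]
      ring
    · rw [phi_append, hsum]
      calc (2 ^ l).factorial * (phi ls) ^ (2 ^ l)
          ≤ (2 ^ l).factorial * ((2 ^ k).factorial * 2 ^ (2 ^ k)) ^ (2 ^ l) :=
            Nat.mul_le_mul_left _ (Nat.pow_le_pow_left hle _)
        _ = (2 ^ l).factorial * ((2 ^ k).factorial) ^ (2 ^ l) * 2 ^ (2 ^ k * 2 ^ l) := by
            rw [mul_pow, ← pow_mul]; ring
        _ ≤ (2 ^ (k + l)).factorial * 2 ^ (2 ^ (k + l)) := by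
            have hbell := Nat.uniformBell_mul_eq (2 ^ l) (n := 2 ^ k) (by positivity)
            have hmul : 2 ^ l * 2 ^ k = 2 ^ (k + l) := by rw [← pow_add]; ring_nf
            rw [hmul] at hbell
            have h1 : (2 ^ l).factorial * ((2 ^ k).factorial) ^ (2 ^ l) ≤
                (2 ^ (k + l)).factorial := by
              calc (2 ^ l).factorial * ((2 ^ k).factorial) ^ (2 ^ l)
                  ≤ Nat.uniformBell (2 ^ l) (2 ^ k) * ((2 ^ k).factorial ^ (2 ^ l) *
                    (2 ^ l).factorial) := by
                    have : 1 ≤ Nat.uniformBell (2 ^ l) (2 ^ k) := by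
                      rcases Nat.eq_zero_or_pos (Nat.uniformBell (2 ^ l) (2 ^ k)) with h | h
                      · rw [h, zero_mul, zero_mul] at hbell
                        exact absurd hbell.symm (Nat.factorial_ne_zero _)
                      · exact h
                    calc (2 ^ l).factorial * ((2 ^ k).factorial) ^ (2 ^ l)
                        = 1 * ((2 ^ k).factorial ^ (2 ^ l) * (2 ^ l).factorial) := by ring
                      _ ≤ _ := Nat.mul_le_mul_right _ this
                _ = (2 ^ (k + l)).factorial := by rw [← hbell]; ring
            have h2 : 2 ^ k * 2 ^ l = 2 ^ (k + l) := by rw [← pow_add]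
            rw [h2]
            exact Nat.mul_le_mul_right _ h1

/-- For any string `α` of length `k`: `2^{2^{k+1}-1} ≤ φ(α) ≤ (2^k)!·2^{2^k}` and
`φ(α)·2^{1-2^{k+1}}` is an odd integer. -/
theorem stmt19 (ls : List ℕ) (k : ℕ) (hk : ls.sum = k) :
    2 ^ (2 ^ (k + 1) - 1) ≤ phi ls ∧
    phi ls ≤ (2 ^ k).factorial * 2 ^ (2 ^ k) ∧
    2 ^ (2 ^ (k + 1) - 1) ∣ phi ls ∧
    Odd (phi ls / 2 ^ (2 ^ (k + 1) - 1)) := by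
  obtain ⟨m, hm, heq, hle⟩ := phi_key ls
  rw [hk] at heq hle
  have hm1 : 1 ≤ m := hm.pos
  refine ⟨?_, hle, ⟨m, heq⟩, ?_⟩
  · calc 2 ^ (2 ^ (k + 1) - 1) = 2 ^ (2 ^ (k + 1) - 1) * 1 := by ring
      _ ≤ 2 ^ (2 ^ (k + 1) - 1) * m := Nat.mul_le_mul_left _ hm1
      _ = phi ls := heq.symm
  · rw [heq, Nat.mul_div_cancel_left _ (by positivity)]
    exact hm
end
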